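/- In a Hoare-synchronized transition of a structured amoeboid where each node of the graph is shared by at most two edges and every applicable auxiliary production exposes non-trivial actions on exactly two nodes of the rewritten edge, the set of synchronizing edges decomposes into maximal chains, and each such chain either has both endpoints at external nodes or forms a cycle consisting entirely of internal nodes; moreover exactly one chain of the first kind exists whenever the overall transition exposes non-ε actions on exactly two external nodes. -/

import Mathlib

open Finset

lemma even_sum_degree_closed {V : Type*} [Fintype V] [DecidableEq V]
    (G : SimpleGraph V) [DecidableRel G.Adj] (S : Finset V)
    (hS : ∀ v ∈ S, ∀ w, G.Adj v w → w ∈ S) :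
    Even (∑ v ∈ S, G.degree v) := by
  classical
  set D : Finset G.Dart := univ.filter (fun d => d.fst ∈ S) with hD
  have hcard : D.card = ∑ v ∈ S, G.degree v := by
    rw [card_eq_sum_card_fiberwise (f := fun d : G.Dart => d.fst) (s := D) (t := S)
      (fun d hd => (mem_filter.mp hd).2)]
    refine Finset.sum_congr rfl fun v hv => ?_
    rw [← SimpleGraph.dart_fst_fiber_card_eq_degree]
    congr 1
    ext d
    simp only [hD, mem_filter, mem_univ, true_and]
    constructor
    · rintro ⟨_, h⟩; exact h
    · rintro h; exact ⟨h ▸ hv, h⟩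
  have hz : (∑ _d ∈ D, (1 : ZMod 2)) = 0 := by
    refine Finset.sum_involution (fun d _ => d.symm) (fun d _ => ?_) (fun d _ _ => ?_)
      (fun d hd => ?_) (fun d _ => ?_)
    · decide
    · exact d.symm_ne
    · simp only [hD, mem_filter, mem_univ, true_and] at hd ⊢
      exact hS _ hd _ d.adj
    · exact d.symm_symm
  rw [Finset.sum_const, nsmul_eq_mul, mul_one] at hz
  rw [← hcard]
  exact even_iff_two_dvd.mpr ((ZMod.natCast_eq_zero_iff D.card 2).mp hz)

/-- abstract form of the decomposition of a synchronizing amoeboid into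
chains. Consider the graph of active synchronizing edges of a structured amoeboid: a
finite simple graph on nodes partitioned into external (`ext`) and internal (`int`)
nodes, where external nodes touch at most one active edge and internal nodes touch
either zero or exactly two active edges. Then every connected component containing an
active edge either is a chain with (two distinct) endpoints at external nodes, or
consists entirely of internal nodes (a cycle of internal nodes, all of degree 2);
moreover, if the transition exposes non-ε actions on exactly two external nodes (i.e.
exactly two external nodes are active), there is exactly one component of the first
kind. -/
theorem amoeboid_synchronization_decomposition {V : Type*} [Fintype V] [DecidableEq V]
    (G : SimpleGraph V) [DecidableRel G.Adj]
    (ext int : Set V)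
    (hpart : ∀ v, v ∈ ext ↔ v ∉ int)
    (hdeg_ext : ∀ v ∈ ext, G.degree v ≤ 1)
    (hdeg_int : ∀ v ∈ int, G.degree v = 0 ∨ G.degree v = 2) :
    (∀ C : G.ConnectedComponent,
      (∃ v, G.connectedComponentMk v = C ∧ 0 < G.degree v) →
        ((∃ v w, v ≠ w ∧ v ∈ ext ∧ w ∈ ext ∧
            G.connectedComponentMk v = C ∧ G.connectedComponentMk w = C ∧
            G.degree v = 1 ∧ G.degree w = 1) ∨
         (∀ v, G.connectedComponentMk v = C → v ∈ int ∧ G.degree v = 2))) ∧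
    ((ext ∩ {v | G.degree v = 1}).ncard = 2 →
      ∃! C : G.ConnectedComponent,
        ∃ v, v ∈ ext ∧ G.degree v = 1 ∧ G.connectedComponentMk v = C) := by
  classical
  -- a degree-1 vertex is external
  have hext_of_deg1 : ∀ v, G.degree v = 1 → v ∈ ext := by
    intro v hv
    by_contra h
    have hint : v ∈ int := not_not.mp (fun hn => h ((hpart v).mpr hn))
    rcases hdeg_int v hint with h0 | h2 <;> omega
  have key : ∀ C : G.ConnectedComponent,
      (∃ v, G.connectedComponentMk v = C ∧ 0 < G.degree v) →
        ((∃ v w, v ≠ w ∧ v ∈ ext ∧ w ∈ ext ∧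
            G.connectedComponentMk v = C ∧ G.connectedComponentMk w = C ∧
            G.degree v = 1 ∧ G.degree w = 1) ∨
         (∀ v, G.connectedComponentMk v = C → v ∈ int ∧ G.degree v = 2)) := by
    rintro C ⟨v0, hv0C, hv0d⟩
    -- every vertex of C has positive degree
    have hpos : ∀ u, G.connectedComponentMk u = C → 0 < G.degree u := by
      intro u huC
      rcases eq_or_ne u v0 with rfl | hne
      · exact hv0d
      · have hr : G.Reachable u v0 :=
          SimpleGraph.ConnectedComponent.exact (huC.trans hv0C.symm)
        obtain ⟨p⟩ := hr
        cases p with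
        | nil => exact absurd rfl hne
        | cons hadj _ => exact (G.degree_pos_iff_exists_adj _).mpr ⟨_, hadj⟩
    -- every vertex of C has degree 1 or 2
    have hdeg12 : ∀ u, G.connectedComponentMk u = C →
        G.degree u = 1 ∨ G.degree u = 2 := by
      intro u huC
      have hp := hpos u huC
      by_cases hu : u ∈ ext
      · have := hdeg_ext u hu; omega
      · have hint : u ∈ int := not_not.mp (fun hn => hu ((hpart u).mpr hn))
        rcases hdeg_int u hint with h0 | h2 <;> omega
    by_cases hA : ∃ a, G.connectedComponentMk a = C ∧ G.degree a = 1
    · obtain ⟨a, haC, had⟩ := hA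
      left
      set S : Finset V := univ.filter (fun u => G.connectedComponentMk u = C) with hSdef
      have hmemS : ∀ u, u ∈ S ↔ G.connectedComponentMk u = C := by
        intro u; simp [hSdef]
      have hclosed : ∀ v ∈ S, ∀ w, G.Adj v w → w ∈ S := by
        intro v hv w hvw
        rw [hmemS] at hv ⊢
        rw [← hv]
        exact SimpleGraph.ConnectedComponent.sound hvw.symm.reachable
      have heven := even_sum_degree_closed G S hclosed
      -- there must be a second degree-1 vertex
      have hb : ∃ b, b ≠ a ∧ G.connectedComponentMk b = C ∧ G.degree b = 1 := by
        by_contra hno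
        push_neg at hno
        have haS : a ∈ S := (hmemS a).mpr haC
        have hsum2 : ∑ u ∈ S.erase a, G.degree u = (S.erase a).card * 2 := by
          refine Finset.sum_const_nat ?_
          intro u hu
          have huS := Finset.mem_of_mem_erase hu
          have hune := Finset.ne_of_mem_erase hu
          rcases hdeg12 u ((hmemS u).mp huS) with h1 | h2
          · exact absurd h1 (hno u hune ((hmemS u).mp huS))
          · exact h2
        rw [← Finset.add_sum_erase S _ haS, had, hsum2] at heven
        obtain ⟨k, hk⟩ := heven
        omega
      obtain ⟨b, hba, hbC, hbd⟩ := hb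
      exact ⟨a, b, hba.symm, hext_of_deg1 a had, hext_of_deg1 b hbd,
        haC, hbC, had, hbd⟩
    · right
      push_neg at hA
      intro u huC
      have h2 : G.degree u = 2 := by
        rcases hdeg12 u huC with h1 | h2
        · exact absurd h1 (hA u huC)
        · exact h2
      refine ⟨?_, h2⟩
      by_contra hu
      have hu' : u ∈ ext := (hpart u).mpr hu
      have := hdeg_ext u hu'
      omega
  refine ⟨key, ?_⟩
  intro h2
  obtain ⟨a, b, hab, hset⟩ := Set.ncard_eq_two.mp h2
  have hamem : a ∈ ext ∩ {v | G.degree v = 1} := by rw [hset]; exact Set.mem_insert _ _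
  have hbmem : b ∈ ext ∩ {v | G.degree v = 1} := by
    rw [hset]; exact Set.mem_insert_of_mem _ rfl
  obtain ⟨haext, had⟩ := hamem
  obtain ⟨hbext, hbd⟩ := hbmem
  have had' : G.degree a = 1 := had
  have hbd' : G.degree b = 1 := hbd
  -- a and b lie in the same component
  have hsame : G.connectedComponentMk b = G.connectedComponentMk a := by
    rcases key (G.connectedComponentMk a) ⟨a, rfl, by omega⟩ with
      ⟨v, w, hvw, _, _, hvC, hwC, hvd, hwd⟩ | hall
    · have hv' : v ∈ ({a, b} : Set V) := by
        rw [← hset]; exact ⟨hext_of_deg1 v hvd, hvd⟩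
      have hw' : w ∈ ({a, b} : Set V) := by
        rw [← hset]; exact ⟨hext_of_deg1 w hwd, hwd⟩
      rcases hv' with rfl | rfl
      · rcases hw' with rfl | rfl
        · exact absurd rfl hvw
        · exact hwC
      · rcases hw' with rfl | rfl
        · exact hvC
        · exact absurd rfl hvw
    · exact absurd (hall a rfl).1 ((hpart a).mp haext)
  refine ⟨G.connectedComponentMk a, ⟨a, haext, had', rfl⟩, ?_⟩
  rintro C' ⟨v, hvext, hvd, hvC'⟩
  have hv' : v ∈ ({a, b} : Set V) := by rw [← hset]; exact ⟨hvext, hvd⟩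
  rcases hv' with rfl | rfl
  · exact hvC'.symm
  · rw [← hvC', hsame]
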